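/- Let A ∈ ℤ^{m×n} with all entries of absolute value at most Δ, b ∈ ℤ^m, c ∈ ℤ^n. Suppose the set S = {x ∈ ℤ^n : Ax = b, x ≥ 0} is nonempty and the set of objective values {cᵀx : x ∈ S} is bounded above. Then there exists x* ∈ S with cᵀx* ≥ cᵀx for all x ∈ S and ‖x*‖₁ ≤ n²·(m·(Δ + ‖b‖_∞))^{2m+1}. -/

import Mathlib

open Matrix Finset

open Matrix Finset

/-- Binomial-type inequality. -/
lemma pap_pow_succ_ge (a : ℕ) : ∀ k : ℕ, a^(k+1) + (k+1)*a^k ≤ (a+1)^(k+1) := by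
  intro k
  induction k with
  | zero => simp [pow_succ]
  | succ k ih =>
    have h1 : (a+1)^(k+1+1) = (a+1) * (a+1)^(k+1) := by ring
    have h2 : (a+1) * (a^(k+1) + (k+1)*a^k) ≤ (a+1) * (a+1)^(k+1) :=
      Nat.mul_le_mul_left _ ih
    calc a^(k+1+1) + (k+1+1)*a^(k+1)
        ≤ (a+1) * (a^(k+1) + (k+1)*a^k) := by ring_nf; nlinarith [Nat.zero_le (a^k)]
      _ ≤ (a+1)^(k+1+1) := by rw [h1]; exact h2

/-- Determinant bound, columnwise. -/
lemma pap_det_bound {k : ℕ} (M : Matrix (Fin k) (Fin k) ℤ) (C : Fin k → ℤ)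
    (h : ∀ i j, |M i j| ≤ C j) : |M.det| ≤ (k.factorial : ℤ) * ∏ j, C j := by
  have hC : ∀ j, 0 ≤ C j := fun j => le_trans (abs_nonneg _) (h j j)
  rw [Matrix.det_apply]
  calc |∑ σ : Equiv.Perm (Fin k), Equiv.Perm.sign σ • ∏ i, M (σ i) i|
      ≤ ∑ σ : Equiv.Perm (Fin k), |Equiv.Perm.sign σ • ∏ i, M (σ i) i| :=
        Finset.abs_sum_le_sum_abs _ _
    _ ≤ ∑ _σ : Equiv.Perm (Fin k), ∏ j, C j := by
        apply Finset.sum_le_sum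
        intro σ _
        have h1 : |Equiv.Perm.sign σ • ∏ i, M (σ i) i| = |∏ i, M (σ i) i| := by
          rcases Int.units_eq_one_or (Equiv.Perm.sign σ) with h' | h' <;>
            simp [h', Units.smul_def]
        rw [h1, Finset.abs_prod]
        exact Finset.prod_le_prod (fun i _ => abs_nonneg _) (fun i _ => h (σ i) i)
    _ = (k.factorial : ℤ) * ∏ j, C j := by
        rw [Finset.sum_const, Finset.card_univ, Fintype.card_perm, Fintype.card_fin,
          nsmul_eq_mul]

/-- Numeric inequality for the final bound. -/
lemma pap_numeric (m n Δ B : ℕ) (hm : 1 ≤ m) (hn : 2 ≤ n) (hΔ : 1 ≤ Δ) (hB : 1 ≤ B) :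
    n*(m.factorial*Δ^m) + m*(m.factorial*Δ^(m-1)*(B + n*Δ*(m.factorial*Δ^m)))
      ≤ n^2*(m*(Δ+B))^(2*m+1) := by
  set F := m.factorial with hF
  set E := Δ + B with hE
  have hFm : F ≤ m^m := Nat.factorial_le_pow m
  have hE2 : 2 ≤ E := by omega
  have hEΔ : Δ + 1 ≤ E := by omega
  set X := m^(2*m+1) * E^(2*m+1) with hX
  have hT : n^2*(m*E)^(2*m+1) = n^2 * X := by rw [hX, mul_pow]
  -- key : (Δ+2m+1) * Δ^(2m) ≤ E^(2m+1)
  have key : (Δ + (2*m+1)) * Δ^(2*m) ≤ E^(2*m+1) := by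
    have h1 : Δ^(2*m+1) + (2*m+1)*Δ^(2*m) ≤ (Δ+1)^(2*m+1) := pap_pow_succ_ge Δ (2*m)
    have h2 : (Δ+1)^(2*m+1) ≤ E^(2*m+1) := Nat.pow_le_pow_left hEΔ _
    calc (Δ + (2*m+1)) * Δ^(2*m) = Δ^(2*m+1) + (2*m+1)*Δ^(2*m) := by ring
      _ ≤ (Δ+1)^(2*m+1) := h1
      _ ≤ E^(2*m+1) := h2
  -- t1 + t3 ≤ n*X
  have ht13 : n*(F*Δ^m) + n*m*F^2*Δ^(2*m) ≤ n * X := by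
    have e1 : n*(F*Δ^m) ≤ n * (m^(2*m+1) * Δ^(2*m)) := by
      have : F*Δ^m ≤ m^(2*m+1) * Δ^(2*m) :=
        Nat.mul_le_mul (le_trans hFm (Nat.pow_le_pow_right (by omega) (by omega)))
          (Nat.pow_le_pow_right hΔ (by omega))
      exact Nat.mul_le_mul_left _ this
    have e2 : n*m*F^2*Δ^(2*m) ≤ n * (m^(2*m+1) * Δ^(2*m)) := by
      have h1 : m * F^2 ≤ m^(2*m+1) := by
        calc m * F^2 ≤ m * (m^m)^2 := Nat.mul_le_mul_left _ (Nat.pow_le_pow_left hFm 2)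
          _ = m^(2*m+1) := by ring
      calc n*m*F^2*Δ^(2*m) = n * (m * F^2 * Δ^(2*m)) := by ring
        _ ≤ n * (m^(2*m+1) * Δ^(2*m)) := by
            exact Nat.mul_le_mul_left _ (Nat.mul_le_mul_right _ h1)
    have e3 : n * (m^(2*m+1) * Δ^(2*m)) + n * (m^(2*m+1) * Δ^(2*m)) ≤ n * X := by
      rw [hX]
      have h2 : 2 * Δ^(2*m) ≤ E^(2*m+1) := by
        calc 2 * Δ^(2*m) ≤ (Δ + (2*m+1)) * Δ^(2*m) := by
              apply Nat.mul_le_mul_right; omega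
          _ ≤ E^(2*m+1) := key
      calc n * (m^(2*m+1) * Δ^(2*m)) + n * (m^(2*m+1) * Δ^(2*m))
          = n * (m^(2*m+1) * (2 * Δ^(2*m))) := by ring
        _ ≤ n * (m^(2*m+1) * E^(2*m+1)) := by
            exact Nat.mul_le_mul_left _ (Nat.mul_le_mul_left _ h2)
    omega
  -- t2 ≤ n*X
  have ht2 : m*(F*Δ^(m-1)*B) ≤ n * X := by
    have h1 : Δ^(m-1)*B ≤ E^(2*m+1) := by
      calc Δ^(m-1)*B ≤ E^(m-1)*E := Nat.mul_le_mul (Nat.pow_le_pow_left (by omega) _) (by omega)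
        _ = E^m := by rw [← pow_succ]; congr 1; omega
        _ ≤ E^(2*m+1) := Nat.pow_le_pow_right (by omega) (by omega)
    calc m*(F*Δ^(m-1)*B) = (m*F)*(Δ^(m-1)*B) := by ring
      _ ≤ m^(2*m+1) * E^(2*m+1) := by
          apply Nat.mul_le_mul _ h1
          calc m*F ≤ m*m^m := Nat.mul_le_mul_left _ hFm
            _ = m^(m+1) := by ring
            _ ≤ m^(2*m+1) := Nat.pow_le_pow_right (by omega) (by omega)
      _ = X := hX.symm
      _ ≤ n * X := Nat.le_mul_of_pos_left _ (by omega)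
  -- combine
  have hfin : n * X + n * X ≤ n^2 * X := by
    have : 2 * n ≤ n^2 := by nlinarith
    calc n * X + n * X = (2*n) * X := by ring
      _ ≤ n^2 * X := Nat.mul_le_mul_right _ this
  rw [hT]
  have expand : m*(F*Δ^(m-1)*(B + n*Δ*(F*Δ^m))) = m*(F*Δ^(m-1)*B) + n*m*F^2*Δ^(2*m) := by
    have hΔsplit : Δ^(m-1) * (Δ * Δ^m) = Δ^(2*m) := by
      rw [← pow_succ']
      rw [← pow_add]
      congr 1
      omega
    calc m*(F*Δ^(m-1)*(B + n*Δ*(F*Δ^m)))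
        = m*(F*Δ^(m-1)*B) + n*m*F^2*(Δ^(m-1)*(Δ*Δ^m)) := by ring
      _ = m*(F*Δ^(m-1)*B) + n*m*F^2*Δ^(2*m) := by rw [hΔsplit]
  rw [expand]
  omega

lemma pap_cast_mulVec {m n : ℕ} (M : Matrix (Fin m) (Fin n) ℤ) (u : Fin n → ℤ) :
    (M.map (Int.cast : ℤ → ℚ)).mulVec (fun j => (u j : ℚ)) = fun i => ((M.mulVec u) i : ℚ) := by
  funext i
  simp only [Matrix.mulVec, dotProduct, Matrix.map_apply]
  push_cast
  rfl

lemma pap_cast_det {k : ℕ} (M : Matrix (Fin k) (Fin k) ℤ) :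
    (M.map (Int.cast : ℤ → ℚ)).det = (M.det : ℚ) := by
  have h := RingHom.map_det (Int.castRingHom ℚ) M
  rw [RingHom.mapMatrix_apply] at h
  exact h.symm

lemma pap_mulVec_inj {m : ℕ} (M : Matrix (Fin m) (Fin m) ℤ) (hdet : M.det ≠ 0)
    {u v : Fin m → ℤ} (h : M.mulVec u = M.mulVec v) : u = v := by
  by_contra hne
  have hd : u - v ≠ 0 := sub_ne_zero.mpr hne
  have hker : M.mulVec (u - v) = 0 := by
    rw [Matrix.mulVec_sub, h, sub_self]
  have hq : (M.map (Int.cast : ℤ → ℚ)).det = 0 := by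
    apply Matrix.exists_mulVec_eq_zero_iff.mp
    refine ⟨fun j => ((u - v) j : ℚ), ?_, ?_⟩
    · intro h0
      apply hd
      funext j
      have h2 := congrFun h0 j
      simp only [Pi.zero_apply] at h2 ⊢
      exact_mod_cast h2
    · rw [pap_cast_mulVec, hker]
      funext i; simp
  rw [pap_cast_det] at hq
  exact hdet (by exact_mod_cast hq)

lemma pap_square_det {k : ℕ} (v : Fin k → Fin k → ℤ)
    (hv : LinearIndependent ℚ (fun a => (fun i => (v a i : ℚ)))) :
    (Matrix.of (fun i a => v a i)).det ≠ 0 := by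
  intro h0
  have hq : ((Matrix.of (fun i a => v a i)).map (Int.cast : ℤ → ℚ)).det = 0 := by
    rw [pap_cast_det, h0]; rfl
  obtain ⟨w, hw0, hker⟩ := Matrix.exists_mulVec_eq_zero_iff.mpr hq
  have hall := Fintype.linearIndependent_iff.mp hv w ?_
  · exact hw0 (funext fun a => hall a)
  · funext i
    have h1 := congrFun hker i
    simpa [Matrix.mulVec, dotProduct, Matrix.map_apply, mul_comm] using h1

lemma pap_ext (m : ℕ) : ∀ (d k : ℕ) (hk : k ≤ m), m - k = d → ∀ (v : Fin k → Fin m → ℤ),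
    LinearIndependent ℚ (fun a => (fun i => (v a i : ℚ))) →
    ∃ M : Matrix (Fin m) (Fin m) ℤ,
      M.det ≠ 0 ∧ (∀ a i, M i (Fin.castLE hk a) = v a i) ∧
      (∀ j : Fin m, (∀ a : Fin k, j ≠ Fin.castLE hk a) → ∀ i, |M i j| ≤ 1) := by
  intro d
  induction d with
  | zero =>
    intro k hk hd v hv
    have hkm : k = m := by omega
    subst hkm
    refine ⟨Matrix.of (fun i a => v a i), pap_square_det v hv, ?_, ?_⟩
    · intro a i
      have h1 : Fin.castLE hk a = a := by ext; simp
      rw [h1]; rfl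
    · intro j hj i
      exact absurd (show j = Fin.castLE hk j by ext; simp) (fun h => hj j h)
  | succ d ih =>
    intro k hk hd v hv
    have hkm : k < m := by omega
    have hk1 : k + 1 ≤ m := by omega
    have hex : ∃ i₀ : Fin m, (Pi.single i₀ 1 : Fin m → ℚ) ∉
        Submodule.span ℚ (Set.range (fun a => (fun i => (v a i : ℚ)))) := by
      by_contra hearly
      push_neg at hearly
      have htop : Submodule.span ℚ (Set.range (fun a => (fun i => (v a i : ℚ)))) = ⊤ := by
        rw [eq_top_iff, ← (Pi.basisFun ℚ (Fin m)).span_eq, Submodule.span_le]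
        rintro y ⟨i, rfl⟩
        simpa [Pi.basisFun_apply] using hearly i
      let bb : Module.Basis (Fin k) ℚ (Fin m → ℚ) := Module.Basis.mk hv (le_of_eq htop.symm)
      have hcard := Module.finrank_eq_card_basis bb
      rw [Module.finrank_pi] at hcard
      simp only [Fintype.card_fin] at hcard
      omega
    obtain ⟨i₀, hi₀⟩ := hex
    set e : Fin m → ℤ := Pi.single i₀ 1 with he
    have hcaste : (fun i => ((e i : ℚ))) = (Pi.single i₀ 1 : Fin m → ℚ) := by
      funext i
      by_cases h : i = i₀ <;> simp [he, Pi.single_apply, h]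
    have hsnoc : LinearIndependent ℚ
        (fun a => (fun i => ((Fin.snoc v e : Fin (k+1) → Fin m → ℤ) a i : ℚ))) := by
      have heq : (fun a => (fun i => ((Fin.snoc v e : Fin (k+1) → Fin m → ℤ) a i : ℚ)))
          = Fin.snoc (fun a => (fun i => (v a i : ℚ))) (Pi.single i₀ 1) := by
        funext a
        refine Fin.lastCases ?_ ?_ a
        · rw [← hcaste]
          simp [Fin.snoc_last]
        · intro a'
          simp [Fin.snoc_castSucc]
      rw [heq]
      exact linearIndependent_fin_snoc.mpr ⟨hv, hi₀⟩
    obtain ⟨M, hdet, hcols, hoth⟩ := ih (k+1) hk1 (by omega) (Fin.snoc v e) hsnoc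
    refine ⟨M, hdet, ?_, ?_⟩
    · intro a i
      have h1 : Fin.castLE hk a = Fin.castLE hk1 (Fin.castSucc a) := by ext; simp
      rw [h1, hcols (Fin.castSucc a) i]
      simp [Fin.snoc_castSucc]
    · intro j hj i
      by_cases hlast : j = Fin.castLE hk1 (Fin.last k)
      · rw [hlast, hcols (Fin.last k) i]
        have h2 : (Fin.snoc v e : Fin (k+1) → Fin m → ℤ) (Fin.last k) i = e i := by
          simp [Fin.snoc_last]
        rw [h2, he]
        by_cases h : i = i₀ <;> simp [Pi.single_apply, h]
      · apply hoth
        intro a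
        refine Fin.lastCases ?_ ?_ a
        · exact hlast
        · intro a' h
          apply hj a'
          rw [h]
          ext; simp

lemma pap_mulVec_sum {m n : ℕ} {R : Type*} [CommRing R] (M : Matrix (Fin m) (Fin n) R)
    {ι : Type*} [Fintype ι]
    (f : ι → (Fin n → R)) : M.mulVec (∑ a, f a) = ∑ a, M.mulVec (f a) := by
  simp only [← Matrix.mulVecLin_apply]
  exact map_sum _ _ _

lemma pap_sum_single_eq {n : ℕ} {R : Type*} [Ring R] {ι : Type*} [Fintype ι]
    (t : ι → R) (g : ι → Fin n) (hg : Function.Injective g) (a₀ : ι) :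
    (∑ a, t a • (Pi.single (g a) (1:R) : Fin n → R)) (g a₀) = t a₀ := by
  classical
  rw [Finset.sum_apply]
  rw [Finset.sum_eq_single a₀]
  · simp
  · intro a _ hne
    have : g a₀ ≠ g a := fun h => hne (hg h.symm)
    simp [Pi.single_apply, this]
  · simp

lemma pap_sum_single_ne {n : ℕ} {R : Type*} [Ring R] {ι : Type*} [Fintype ι]
    (t : ι → R) (g : ι → Fin n) (j : Fin n) (hj : ∀ a, g a ≠ j) :
    (∑ a, t a • (Pi.single (g a) (1:R) : Fin n → R)) j = 0 := by
  classical
  rw [Finset.sum_apply]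
  apply Finset.sum_eq_zero
  intro a _
  have : j ≠ g a := fun h => hj a h.symm
  simp [Pi.single_apply, this]

lemma pap_mulVec_inj_q {m : ℕ} (M : Matrix (Fin m) (Fin m) ℚ) (hdet : M.det ≠ 0)
    {u v : Fin m → ℚ} (h : M.mulVec u = M.mulVec v) : u = v := by
  by_contra hne
  apply hdet
  apply Matrix.exists_mulVec_eq_zero_iff.mp
  refine ⟨u - v, sub_ne_zero.mpr hne, ?_⟩
  rw [Matrix.mulVec_sub, h, sub_self]

lemma pap_sum_over_finset {n : ℕ} {k : ℕ} (J : Finset (Fin n)) (e : Fin k ≃ {j // j ∈ J})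
    (f : Fin n → ℤ) : ∑ j ∈ J, f j = ∑ a : Fin k, f ((e a).1) := by
  rw [← Finset.sum_attach J f, ← Finset.univ_eq_attach]
  exact (Equiv.sum_comp e (fun t => f t.1)).symm

lemma pap_main {m n : ℕ} (hm : 1 ≤ m) (hn : 2 ≤ n) (Δ B : ℕ) (hΔ1 : 1 ≤ Δ) (hB1 : 1 ≤ B)
    (A : Matrix (Fin m) (Fin n) ℤ) (b : Fin m → ℤ) (x : Fin n → ℤ)
    (hΔ : ∀ i j, |A i j| ≤ (Δ : ℤ)) (hb : ∀ i, |b i| ≤ (B : ℤ))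
    (hx : ∀ j, 0 ≤ x j) (hAx : A.mulVec x = b)
    (hP : ∀ d : Fin n → ℤ, (∀ j, |d j| ≤ x j) → A.mulVec d = 0 → d = 0) :
    ∑ j, x j ≤ ((n^2 * (m * (Δ + B)) ^ (2*m+1) : ℕ) : ℤ) := by
  classical
  set H : ℕ := m.factorial * Δ^m with hH
  set J : Finset (Fin n) := univ.filter (fun j => (H:ℤ) + 1 ≤ x j) with hJdef
  have hJmem : ∀ j, j ∈ J ↔ (H:ℤ) + 1 ≤ x j := by
    intro j; rw [hJdef]; simp
  set s : {j // j ∈ J} → (Fin m → ℚ) := fun t => (fun i => (A i t.1 : ℚ)) with hs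
  -- Step 1: the columns indexed by J are linearly independent over ℚ
  have hIND : LinearIndependent ℚ s := by
    by_contra hdep
    obtain ⟨I, hI, hWit⟩ := exists_maximal_linearIndepOn ℚ s
    replace hI : LinearIndependent ℚ (fun x : I => s x) := hI
    have hIne : ∃ t, t ∉ I := by
      by_contra hall
      push_neg at hall
      apply hdep
      have huniv : I = Set.univ := Set.eq_univ_of_forall hall
      rw [huniv] at hI
      have := hI.comp (Equiv.Set.univ _).symm (Equiv.injective _)
      exact this
    obtain ⟨t₀, ht₀⟩ := hIne
    obtain ⟨aq, haq0, haqspan⟩ := hWit t₀ ht₀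
    haveI : Fintype I := Set.Finite.fintype (Set.toFinite I)
    set r := Fintype.card I with hr
    have hrm : r ≤ m := by
      have h1 := hI.fintype_card_le_finrank
      rwa [Module.finrank_pi, Fintype.card_fin] at h1
    set eI : Fin r ≃ I := (Fintype.equivFin I).symm with heI
    set v : Fin r → Fin m → ℤ := fun a => (fun i => A i ((eI a).1.1)) with hv
    have hvind : LinearIndependent ℚ (fun a => (fun i => (v a i : ℚ))) :=
      hI.comp eI eI.injective
    obtain ⟨M, hdet, hcols, hoth⟩ := pap_ext m (m - r) r hrm rfl v hvind
    have hMbd : ∀ i j, |M i j| ≤ (Δ:ℤ) := by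
      intro i j
      by_cases hcase : ∃ a : Fin r, j = Fin.castLE hrm a
      · obtain ⟨a, rfl⟩ := hcase
        rw [hcols a i]
        exact hΔ i _
      · push_neg at hcase
        refine le_trans (hoth j (fun a => hcase a) i) ?_
        exact_mod_cast hΔ1
    have hdetbd : |M.det| ≤ ((H:ℕ):ℤ) := by
      have h1 := pap_det_bound M (fun _ => (Δ:ℤ)) hMbd
      rw [Finset.prod_const, Finset.card_univ, Fintype.card_fin] at h1
      rw [hH]
      push_cast
      exact h1
    set col : Fin m → ℤ := fun i => A i t₀.1 with hcol
    set w : Fin m → ℤ := M.cramer col with hw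
    have hMw : M.mulVec w = M.det • col := Matrix.mulVec_cramer M col
    have hwbd : ∀ j, |w j| ≤ ((H:ℕ):ℤ) := by
      intro j
      rw [hw, Matrix.cramer_apply]
      have hbd : ∀ i j', |(M.updateCol j col) i j'| ≤ (Δ:ℤ) := by
        intro i j'
        by_cases h : j' = j
        · subst h; rw [Matrix.updateCol_self]; exact hΔ i _
        · rw [Matrix.updateCol_ne h]; exact hMbd i j'
      have h1 := pap_det_bound (M.updateCol j col) (fun _ => (Δ:ℤ)) hbd
      rw [Finset.prod_const, Finset.card_univ, Fintype.card_fin] at h1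
      rw [hH]
      push_cast
      exact h1
    -- padding coordinates of w vanish
    have hst : s t₀ ∈ Submodule.span ℚ (Set.range (fun a => (fun i => (v a i : ℚ)))) := by
      have h1 : s t₀ = aq⁻¹ • (aq • s t₀) := by
        rw [smul_smul, inv_mul_cancel₀ haq0, one_smul]
      rw [h1]
      apply Submodule.smul_mem
      have h2 : s '' I = Set.range (fun a => (fun i => (v a i : ℚ))) := by
        ext y
        constructor
        · rintro ⟨t, htI, rfl⟩
          refine ⟨eI.symm ⟨t, htI⟩, ?_⟩
          rw [hv]
          simp [hs]
        · rintro ⟨a, rfl⟩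
          exact ⟨(eI a).1, (eI a).2, rfl⟩
      rw [← h2]
      exact haqspan
    obtain ⟨cq, hcq⟩ := (Submodule.mem_span_range_iff_exists_fun ℚ).mp hst
    set Mq := M.map (Int.cast : ℤ → ℚ) with hMq
    have hdq : Mq.det ≠ 0 := by
      rw [hMq, pap_cast_det]
      exact_mod_cast hdet
    set yc : Fin m → ℚ := ∑ a : Fin r, cq a • (Pi.single (Fin.castLE hrm a) (1:ℚ) : Fin m → ℚ)
      with hyc
    have hMyc : Mq.mulVec yc = s t₀ := by
      rw [hyc, pap_mulVec_sum]
      rw [← hcq]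
      apply Finset.sum_congr rfl
      intro a _
      rw [Matrix.mulVec_smul, Matrix.mulVec_single_one]
      funext i
      simp only [Pi.smul_apply, smul_eq_mul, mul_one, Matrix.col_apply]
      rw [hMq]
      simp only [Matrix.map_apply]
      rw [hcols a i]
    have hwyc : (fun j => ((w j : ℚ))) = (M.det : ℚ) • yc := by
      apply pap_mulVec_inj_q Mq hdq
      rw [pap_cast_mulVec M w, hMw]
      rw [Matrix.mulVec_smul, hMyc]
      funext i
      simp only [Pi.smul_apply, smul_eq_mul]
      rw [hs]
      push_cast
      rfl
    have hpad : ∀ j : Fin m, (∀ a : Fin r, j ≠ Fin.castLE hrm a) → w j = 0 := by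
      intro j hj
      have h1 := congrFun hwyc j
      have h2 : yc j = 0 := by
        rw [hyc]
        exact pap_sum_single_ne _ _ j (fun a h => hj a h.symm)
      rw [Pi.smul_apply, h2, smul_zero] at h1
      exact_mod_cast h1
    -- the relation vector G
    set g : Fin r → Fin n := fun a => (eI a).1.1 with hg
    have hgJ : ∀ a, g a ∈ J := fun a => (eI a).1.2
    have hginj : Function.Injective g := by
      intro a a' h
      apply eI.injective
      apply Subtype.ext
      apply Subtype.ext
      exact h
    have hgt₀ : ∀ a, g a ≠ t₀.1 := by
      intro a h
      apply ht₀
      have : (eI a).1 = t₀ := Subtype.ext h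
      rw [← this]
      exact (eI a).2
    set G : Fin n → ℤ := (M.det • (Pi.single t₀.1 (1:ℤ) : Fin n → ℤ))
      - ∑ a : Fin r, w (Fin.castLE hrm a) • (Pi.single (g a) (1:ℤ) : Fin n → ℤ) with hG
    have hGt : G t₀.1 = M.det := by
      rw [hG]
      simp only [Pi.sub_apply, Pi.smul_apply, Pi.single_eq_same, smul_eq_mul, mul_one]
      rw [pap_sum_single_ne _ _ _ hgt₀]
      ring
    have hGbd : ∀ j, |G j| ≤ x j := by
      intro j
      by_cases hjt : j = t₀.1
      · subst hjt
        rw [hGt]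
        have h1 : (H:ℤ) + 1 ≤ x t₀.1 := (hJmem _).mp t₀.2
        calc |M.det| ≤ ((H:ℕ):ℤ) := hdetbd
          _ ≤ x t₀.1 := by push_cast; omega
      · have hfirst : (Pi.single t₀.1 (1:ℤ) : Fin n → ℤ) j = 0 := Pi.single_eq_of_ne hjt 1
        by_cases hex : ∃ a, g a = j
        · obtain ⟨a₀, rfl⟩ := hex
          have h2 : G (g a₀) = M.det * 0 - w (Fin.castLE hrm a₀) := by
            rw [hG]
            simp only [Pi.sub_apply, Pi.smul_apply, smul_eq_mul]
            rw [hfirst, pap_sum_single_eq _ _ hginj a₀]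
          rw [h2]
          have h1 : (H:ℤ) + 1 ≤ x (g a₀) := (hJmem _).mp (hgJ a₀)
          calc |M.det * 0 - w (Fin.castLE hrm a₀)| = |w (Fin.castLE hrm a₀)| := by
                rw [mul_zero, zero_sub, abs_neg]
            _ ≤ ((H:ℕ):ℤ) := hwbd _
            _ ≤ x (g a₀) := by push_cast; omega
        · push_neg at hex
          have h2 : G j = M.det * 0 - 0 := by
            rw [hG]
            simp only [Pi.sub_apply, Pi.smul_apply, smul_eq_mul]
            rw [hfirst, pap_sum_single_ne _ _ _ hex]
          rw [h2]
          simp only [mul_zero, sub_zero, abs_zero]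
          exact hx j
    have hG0 : A.mulVec G = 0 := by
      have hspl : ∀ i, M.mulVec w i = ∑ a : Fin r, M i (Fin.castLE hrm a) * w (Fin.castLE hrm a) := by
        intro i
        have h0 : M.mulVec w i = ∑ j, M i j * w j := rfl
        rw [h0]
        rw [← Finset.sum_subset (Finset.subset_univ ((univ : Finset (Fin r)).image (Fin.castLE hrm)))]
        · rw [Finset.sum_image (by intro a _ a' _ h; exact Fin.castLE_injective hrm h)]
        · intro j _ hj
          have hj' : ∀ a : Fin r, j ≠ Fin.castLE hrm a := by
            intro a h
            apply hj
            rw [Finset.mem_image]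
            exact ⟨a, Finset.mem_univ a, h.symm⟩
          rw [hpad j hj', mul_zero]
      rw [hG, Matrix.mulVec_sub, Matrix.mulVec_smul, Matrix.mulVec_single_one, pap_mulVec_sum]
      funext i
      simp only [Pi.sub_apply, Pi.smul_apply, Finset.sum_apply, smul_eq_mul, mul_one, Matrix.col_apply]
      have h3 : ∀ a : Fin r, (A.mulVec (w (Fin.castLE hrm a) • (Pi.single (g a) (1:ℤ) : Fin n → ℤ))) i
          = M i (Fin.castLE hrm a) * w (Fin.castLE hrm a) := by
        intro a
        rw [Matrix.mulVec_smul, Matrix.mulVec_single_one]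
        simp only [Pi.smul_apply, smul_eq_mul, mul_one, Matrix.col_apply]
        rw [hcols a i]
        rw [hv]
        ring
      rw [Finset.sum_congr rfl (fun a _ => h3 a)]
      rw [← hspl i, hMw]
      simp only [Pi.smul_apply, smul_eq_mul, Pi.zero_apply]
      rw [hcol]
      ring
    have := hP G hGbd hG0
    rw [this] at hGt
    exact hdet (by rw [← hGt]; rfl)
  -- Step 2: Cramer bounds on the large coordinates
  have hkm : J.card ≤ m := by
    have h1 := hIND.fintype_card_le_finrank
    rwa [Module.finrank_pi, Fintype.card_fin, Fintype.card_coe] at h1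
  set eJ : Fin J.card ≃ {j // j ∈ J} := (Fintype.equivFinOfCardEq (Fintype.card_coe J)).symm
    with heJ
  set v : Fin J.card → Fin m → ℤ := fun a => (fun i => A i ((eJ a).1)) with hv
  have hvind : LinearIndependent ℚ (fun a => (fun i => (v a i : ℚ))) :=
    hIND.comp eJ eJ.injective
  obtain ⟨M, hdet, hcols, hoth⟩ := pap_ext m (m - J.card) J.card hkm rfl v hvind
  have hMbd : ∀ i j, |M i j| ≤ (Δ:ℤ) := by
    intro i j
    by_cases hcase : ∃ a : Fin J.card, j = Fin.castLE hkm a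
    · obtain ⟨a, rfl⟩ := hcase
      rw [hcols a i]
      exact hΔ i _
    · push_neg at hcase
      refine le_trans (hoth j (fun a => hcase a) i) ?_
      exact_mod_cast hΔ1
  set Bt : ℕ := B + n*Δ*H with hBt
  set b' : Fin m → ℤ := fun i => ∑ j ∈ J, A i j * x j with hb'
  have hsml : ∀ j, j ∉ J → x j ≤ (H:ℤ) := by
    intro j hj
    rw [hJmem j] at hj
    omega
  have hsd : ∀ i, ∑ j ∈ univ \ J, A i j * x j + b' i = b i := by
    intro i
    rw [← hAx]
    have h0 : A.mulVec x i = ∑ j, A i j * x j := rfl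
    rw [h0, hb']
    exact Finset.sum_sdiff (Finset.subset_univ J)
  have hb't : ∀ i, |b' i| ≤ ((Bt:ℕ):ℤ) := by
    intro i
    have habs : |∑ j ∈ univ \ J, A i j * x j| ≤ (n:ℤ) * ((Δ:ℤ) * (H:ℤ)) := by
      calc |∑ j ∈ univ \ J, A i j * x j| ≤ ∑ j ∈ univ \ J, |A i j * x j| :=
            Finset.abs_sum_le_sum_abs _ _
        _ ≤ ∑ _j ∈ univ \ J, (Δ:ℤ) * (H:ℤ) := by
            apply Finset.sum_le_sum
            intro j hj
            rw [abs_mul]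
            apply mul_le_mul (hΔ i j) _ (abs_nonneg _) (by positivity)
            rw [abs_of_nonneg (hx j)]
            exact hsml j (Finset.mem_sdiff.mp hj).2
        _ = ((univ \ J).card : ℤ) * ((Δ:ℤ) * (H:ℤ)) := by
            rw [Finset.sum_const, nsmul_eq_mul]
        _ ≤ (n:ℤ) * ((Δ:ℤ) * (H:ℤ)) := by
            apply mul_le_mul_of_nonneg_right _ (by positivity)
            have h1 : (univ \ J).card ≤ n := by
              refine le_trans (Finset.card_le_univ _) ?_
              simp
            exact_mod_cast h1
    have h2 := hsd i
    have h3 := hb i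
    rw [hBt]
    push_cast
    rw [abs_le] at h3 habs ⊢
    constructor <;> nlinarith [habs.1, habs.2, h3.1, h3.2]
  set y : Fin m → ℤ :=
    ∑ a : Fin J.card, x ((eJ a).1) • (Pi.single (Fin.castLE hkm a) (1:ℤ) : Fin m → ℤ) with hy
  have hMy : M.mulVec y = b' := by
    rw [hy, pap_mulVec_sum, hb']
    funext i
    rw [Finset.sum_apply]
    rw [pap_sum_over_finset J eJ (fun j => A i j * x j)]
    apply Finset.sum_congr rfl
    intro a _
    rw [Matrix.mulVec_smul, Matrix.mulVec_single_one]
    simp only [Pi.smul_apply, smul_eq_mul, mul_one, Matrix.col_apply]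
    rw [hcols a i, hv]
    ring
  have hcra : M.cramer b' = M.det • y := by
    apply pap_mulVec_inj M hdet
    rw [Matrix.mulVec_cramer, Matrix.mulVec_smul, hMy]
  have hdet1 : (1:ℤ) ≤ |M.det| := Int.one_le_abs hdet
  have hxJ : ∀ j ∈ J, x j ≤ ((m.factorial * Δ^(m-1) * Bt : ℕ) : ℤ) := by
    intro j hj
    set a : Fin J.card := eJ.symm ⟨j, hj⟩ with ha
    have hja : ((eJ a).1 : Fin n) = j := by rw [ha]; simp
    have hyx : y (Fin.castLE hkm a) = x j := by
      rw [hy]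
      rw [pap_sum_single_eq (fun a => x ((eJ a).1)) (fun a => Fin.castLE hkm a)
        (Fin.castLE_injective hkm) a]
      rw [hja]
    have h1 : M.cramer b' (Fin.castLE hkm a) = M.det * x j := by
      rw [hcra]
      simp only [Pi.smul_apply, smul_eq_mul]
      rw [hyx]
    have h2 : |M.cramer b' (Fin.castLE hkm a)| ≤ ((m.factorial * Δ^(m-1) * Bt : ℕ):ℤ) := by
      rw [Matrix.cramer_apply]
      have hbd : ∀ i j', |(M.updateCol (Fin.castLE hkm a) b') i j'|
          ≤ (Function.update (fun _ : Fin m => (Δ:ℤ)) (Fin.castLE hkm a) ((Bt:ℕ):ℤ)) j' := by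
        intro i j'
        by_cases h : j' = Fin.castLE hkm a
        · simp only [Matrix.updateCol_apply, Function.update_apply, h, if_true, if_pos]
          exact hb't i
        · simp only [Matrix.updateCol_apply, Function.update_apply, h, if_false]
          exact hMbd i j'
      have h3 := pap_det_bound _ _ hbd
      refine le_trans h3 ?_
      have hprod : (∏ j', (Function.update (fun _ : Fin m => (Δ:ℤ)) (Fin.castLE hkm a)
          ((Bt:ℕ):ℤ)) j') = ((Bt:ℕ):ℤ) * (Δ:ℤ)^(m-1) := by
        rw [Finset.prod_update_of_mem (Finset.mem_univ _), Finset.prod_const]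
        have hc : ((univ : Finset (Fin m)) \ {Fin.castLE hkm a}).card = m - 1 := by
          rw [Finset.card_sdiff_of_subset (by simp)]
          simp
        rw [hc]
      rw [hprod]
      apply le_of_eq
      push_cast
      ring
    calc x j ≤ |x j| := le_abs_self _
      _ ≤ |M.det| * |x j| := le_mul_of_one_le_left (abs_nonneg _) hdet1
      _ = |M.det * x j| := (abs_mul _ _).symm
      _ = |M.cramer b' (Fin.castLE hkm a)| := by rw [h1]
      _ ≤ _ := h2
  -- Step 3: summation
  have hsum1 : ∑ j ∈ J, x j ≤ (J.card : ℤ) * ((m.factorial * Δ^(m-1) * Bt : ℕ) : ℤ) := by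
    have h1 := Finset.sum_le_card_nsmul J x _ hxJ
    simpa [nsmul_eq_mul] using h1
  have hsum2 : ∑ j ∈ univ \ J, x j ≤ (n:ℤ) * (H:ℤ) := by
    calc ∑ j ∈ univ \ J, x j ≤ ∑ _j ∈ univ \ J, (H:ℤ) :=
          Finset.sum_le_sum (fun j hj => hsml j (Finset.mem_sdiff.mp hj).2)
      _ = ((univ \ J).card : ℤ) * (H:ℤ) := by rw [Finset.sum_const, nsmul_eq_mul]
      _ ≤ (n:ℤ) * (H:ℤ) := by
          apply mul_le_mul_of_nonneg_right _ (by positivity)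
          have h1 : (univ \ J).card ≤ n := by
            refine le_trans (Finset.card_le_univ _) ?_
            simp
          exact_mod_cast h1
  have htot : ∑ j, x j ≤ (n:ℤ) * (H:ℤ) + (m:ℤ) * ((m.factorial * Δ^(m-1) * Bt : ℕ) : ℤ) := by
    have e1 : ∑ j ∈ univ \ J, x j + ∑ j ∈ J, x j = ∑ j, x j :=
      Finset.sum_sdiff (Finset.subset_univ J)
    have hJm : (J.card : ℤ) ≤ (m:ℤ) := by exact_mod_cast hkm
    have hC0 : (0:ℤ) ≤ ((m.factorial * Δ^(m-1) * Bt : ℕ) : ℤ) := by positivity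
    nlinarith [hsum1, hsum2, mul_le_mul_of_nonneg_right hJm hC0]
  have hnum := pap_numeric m n Δ B hm hn hΔ1 hB1
  refine le_trans htot ?_
  have hcast : (n:ℤ) * (H:ℤ) + (m:ℤ) * ((m.factorial * Δ^(m-1) * Bt : ℕ) : ℤ)
      = ((n*(m.factorial*Δ^m) + m*(m.factorial*Δ^(m-1)*(B + n*Δ*(m.factorial*Δ^m))) : ℕ) : ℤ) := by
    rw [hBt, hH]
    push_cast
    ring
  rw [hcast]
  exact_mod_cast hnum

/-- Papadimitriou's bound: if the integer program `max{cᵀx : Ax = b, x ∈ ℤⁿ, x ≥ 0}`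
is feasible and bounded, then it has an optimal solution `x*` with
`‖x*‖₁ ≤ n²·(m·(Δ + ‖b‖_∞))^(2m+1)`. -/
theorem papadimitriou_norm_bound {m n : ℕ} (A : Matrix (Fin m) (Fin n) ℤ)
    (b : Fin m → ℤ) (c : Fin n → ℤ) (Δ : ℕ)
    (hΔ : ∀ i j, |A i j| ≤ (Δ : ℤ))
    (hfeas : ∃ x : Fin n → ℤ, 0 ≤ x ∧ A.mulVec x = b)
    (hbdd : BddAbove {v : ℤ | ∃ x : Fin n → ℤ, 0 ≤ x ∧ A.mulVec x = b ∧ c ⬝ᵥ x = v}) :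
    ∃ x' : Fin n → ℤ, 0 ≤ x' ∧ A.mulVec x' = b ∧
      (∀ x : Fin n → ℤ, 0 ≤ x → A.mulVec x = b → c ⬝ᵥ x ≤ c ⬝ᵥ x') ∧
      ∑ i, |x' i| ≤
        ((n ^ 2 * (m * (Δ + Finset.univ.sup fun i => (b i).natAbs)) ^ (2 * m + 1) : ℕ) : ℤ) := by
  classical
  obtain ⟨ub, hub⟩ := hbdd
  obtain ⟨x₀, hx₀0, hx₀b⟩ := hfeas
  obtain ⟨vmax, hvmem, hvub⟩ := Int.exists_greatest_of_bdd
    (P := fun v => ∃ x : Fin n → ℤ, 0 ≤ x ∧ A.mulVec x = b ∧ c ⬝ᵥ x = v)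
    ⟨ub, fun z hz => hub hz⟩ ⟨c ⬝ᵥ x₀, x₀, hx₀0, hx₀b, rfl⟩
  set Opt : (Fin n → ℤ) → Prop := fun x => (0 ≤ x ∧ A.mulVec x = b) ∧ c ⬝ᵥ x = vmax
    with hOptDef
  have hOptne : ∃ x, Opt x := by
    obtain ⟨x₁, h1, h2, h3⟩ := hvmem
    exact ⟨x₁, ⟨h1, h2⟩, h3⟩
  have hOpt_nn : ∀ {x}, Opt x → ∀ j, 0 ≤ x j := fun hx j => hx.1.1 j
  have hOpt_sum_nn : ∀ {x}, Opt x → 0 ≤ ∑ j, x j :=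
    fun hx => Finset.sum_nonneg (fun j _ => hOpt_nn hx j)
  set K1 : Set ℕ := {k | ∃ x, Opt x ∧ (∑ j, x j).toNat = k} with hK1
  have hK1ne : K1.Nonempty := by
    obtain ⟨x₁, hx₁⟩ := hOptne
    exact ⟨_, x₁, hx₁, rfl⟩
  set N₀ : ℕ := sInf K1 with hN₀
  have hN₀le : ∀ x, Opt x → (N₀:ℤ) ≤ ∑ j, x j := by
    intro x hx
    have h1 : (∑ j, x j).toNat ∈ K1 := ⟨x, hx, rfl⟩
    have h2 := Nat.sInf_le h1
    rw [← Int.toNat_of_nonneg (hOpt_sum_nn hx)]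
    exact_mod_cast h2
  set W : Fin n → ℤ := fun j => ((2*N₀+1 : ℕ) : ℤ)^(n - 1 - (j:ℕ)) with hW
  have hW1 : ∀ j, 1 ≤ W j := fun j => one_le_pow₀ (by exact_mod_cast Nat.le_add_left 1 (2*N₀))
  set μ : (Fin n → ℤ) → ℤ := fun x => ∑ j, x j * W j with hμ
  have hμnn : ∀ {x}, (∀ j, 0 ≤ x j) → 0 ≤ μ x := by
    intro x hx
    exact Finset.sum_nonneg (fun j _ => mul_nonneg (hx j) (le_trans zero_le_one (hW1 j)))
  set K2 : Set ℕ := {k | ∃ x, Opt x ∧ (∑ j, x j) = (N₀:ℤ) ∧ (μ x).toNat = k} with hK2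
  have hK2ne : K2.Nonempty := by
    obtain ⟨x₁, hx₁, hk⟩ := Nat.sInf_mem hK1ne
    refine ⟨(μ x₁).toNat, x₁, hx₁, ?_, rfl⟩
    rw [hN₀, ← hk, Int.toNat_of_nonneg (hOpt_sum_nn hx₁)]
  obtain ⟨xs, hxsOpt, hxsSum, hxsμ⟩ := Nat.sInf_mem hK2ne
  have hxs_nn : ∀ j, 0 ≤ xs j := hOpt_nn hxsOpt
  -- the selected optimal solution admits no small kernel vector
  have hP : ∀ d : Fin n → ℤ, (∀ j, |d j| ≤ xs j) → A.mulVec d = 0 → d = 0 := by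
    intro d hdabs hdker
    by_contra hd0
    have hsupne : (univ.filter (fun j => d j ≠ 0)).Nonempty := by
      rcases Function.ne_iff.mp hd0 with ⟨j, hj⟩
      exact ⟨j, by simp only [Finset.mem_filter, Finset.mem_univ, true_and]; exact hj⟩
    set j₀ : Fin n := (univ.filter (fun j => d j ≠ 0)).min' hsupne with hj₀
    have hj₀mem : d j₀ ≠ 0 := by
      have := Finset.min'_mem (univ.filter (fun j => d j ≠ 0)) hsupne
      simpa using this
    set d' : Fin n → ℤ := if 0 < d j₀ then d else -d with hd'
    have hd'abs : ∀ j, |d' j| = |d j| := by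
      intro j
      rw [hd']
      split <;> simp
    have hd'ker : A.mulVec d' = 0 := by
      rw [hd']
      split
      · exact hdker
      · rw [Matrix.mulVec_neg, hdker]; simp
    have hd'j₀ : 0 < d' j₀ := by
      rw [hd']
      rcases lt_or_gt_of_ne hj₀mem with h | h
      · rw [if_neg (by omega)]
        simp only [Pi.neg_apply]
        omega
      · rw [if_pos h]; exact h
    have hd'zero : ∀ j, j < j₀ → d' j = 0 := by
      intro j hjlt
      by_contra hne
      have hne' : d j ≠ 0 := by
        intro h0
        apply hne
        rw [hd']
        split <;> simp [h0]
      have := Finset.min'_le (univ.filter (fun j => d j ≠ 0)) j (by simp [hne'])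
      rw [← hj₀] at this
      omega
    have hd'bd : ∀ j, |d' j| ≤ xs j := fun j => by rw [hd'abs j]; exact hdabs j
    have habs_le : ∀ j, -xs j ≤ d' j ∧ d' j ≤ xs j := by
      intro j
      have := hd'bd j
      rw [abs_le] at this
      exact this
    -- feasibility of xs ± d'
    have hfeas_sub : Opt (xs - d') ∧ Opt (xs + d') := by
      have h1 : (0:Fin n → ℤ) ≤ xs - d' := by
        intro j
        simp only [Pi.sub_apply, Pi.zero_apply]
        have := (habs_le j).2
        omega
      have h2 : (0:Fin n → ℤ) ≤ xs + d' := by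
        intro j
        simp only [Pi.add_apply, Pi.zero_apply]
        have := (habs_le j).1
        omega
      have h3 : A.mulVec (xs - d') = b := by
        rw [Matrix.mulVec_sub, hd'ker, hxsOpt.1.2]; simp
      have h4 : A.mulVec (xs + d') = b := by
        rw [Matrix.mulVec_add, hd'ker, hxsOpt.1.2]; simp
      have h5 : c ⬝ᵥ (xs - d') ≤ vmax := hvub _ ⟨_, h1, h3, rfl⟩
      have h6 : c ⬝ᵥ (xs + d') ≤ vmax := hvub _ ⟨_, h2, h4, rfl⟩
      rw [dotProduct_sub] at h5
      rw [dotProduct_add] at h6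
      have h7 : c ⬝ᵥ d' = 0 := by
        have := hxsOpt.2
        omega
      constructor
      · exact ⟨⟨h1, h3⟩, by rw [dotProduct_sub, h7, hxsOpt.2]; ring⟩
      · exact ⟨⟨h2, h4⟩, by rw [dotProduct_add, h7, hxsOpt.2]; ring⟩
    -- sum of d' is zero
    have hd'sum : ∑ j, d' j = 0 := by
      have h1 := hN₀le _ hfeas_sub.1
      have h2 := hN₀le _ hfeas_sub.2
      rw [show ∑ j, (xs - d') j = ∑ j, xs j - ∑ j, d' j by
        rw [← Finset.sum_sub_distrib]; rfl] at h1
      rw [show ∑ j, (xs + d') j = ∑ j, xs j + ∑ j, d' j by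
        rw [← Finset.sum_add_distrib]; rfl] at h2
      rw [hxsSum] at h1 h2
      omega
    -- the lexicographic decrease
    have hμdec : μ (xs - d') < μ xs := by
      have hdiff : μ xs - μ (xs - d') = ∑ j, d' j * W j := by
        rw [hμ]
        simp only
        rw [← Finset.sum_sub_distrib]
        apply Finset.sum_congr rfl
        intro j _
        simp only [Pi.sub_apply]
        ring
      have hpos : 0 < ∑ j, d' j * W j := by
        have hsplit := Finset.sum_filter_add_sum_filter_not univ (fun j => j₀ < j)
          (fun j => d' j * W j)
        have hhead : ∑ j ∈ univ.filter (fun j => ¬ j₀ < j), d' j * W j = d' j₀ * W j₀ := by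
          apply Finset.sum_eq_single_of_mem j₀ (by simp)
          intro j hj hne
          have hjle : j ≤ j₀ := by
            have := Finset.mem_filter.mp hj
            exact le_of_not_gt this.2
          have : j < j₀ := lt_of_le_of_ne hjle hne
          rw [hd'zero j this, zero_mul]
        by_cases hlast : (j₀ : ℕ) + 1 = n
        · have hempty : univ.filter (fun j => j₀ < j) = ∅ := by
            apply Finset.filter_false_of_mem
            intro j _
            have : (j : ℕ) < n := j.2
            have h2 : (j:ℕ) ≤ (j₀:ℕ) := by omega
            exact not_lt.mpr (by exact_mod_cast h2)
          rw [hempty, Finset.sum_empty] at hsplit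
          rw [← hsplit, hhead]
          have := hW1 j₀
          nlinarith [hd'j₀]
        · set W' : ℤ := ((2*N₀+1 : ℕ) : ℤ)^(n - 1 - ((j₀:ℕ)+1)) with hW'
          have hW'nn : 0 ≤ W' := by positivity
          have htail : |∑ j ∈ univ.filter (fun j => j₀ < j), d' j * W j| ≤ (N₀:ℤ) * W' := by
            calc |∑ j ∈ univ.filter (fun j => j₀ < j), d' j * W j|
                ≤ ∑ j ∈ univ.filter (fun j => j₀ < j), |d' j * W j| :=
                  Finset.abs_sum_le_sum_abs _ _
              _ ≤ ∑ j ∈ univ.filter (fun j => j₀ < j), xs j * W' := by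
                  apply Finset.sum_le_sum
                  intro j hj
                  rw [abs_mul]
                  have hj2 : j₀ < j := (Finset.mem_filter.mp hj).2
                  have hWle : W j ≤ W' := by
                    rw [hW, hW']
                    apply pow_le_pow_right₀ (by exact_mod_cast Nat.le_add_left 1 (2*N₀))
                    have : (j₀:ℕ) + 1 ≤ (j:ℕ) := hj2
                    omega
                  have hWnn : (0:ℤ) ≤ W j := le_trans zero_le_one (hW1 j)
                  rw [abs_of_nonneg hWnn]
                  exact mul_le_mul (hd'bd j) hWle hWnn (hxs_nn j)
              _ = (∑ j ∈ univ.filter (fun j => j₀ < j), xs j) * W' := by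
                  rw [Finset.sum_mul]
              _ ≤ (N₀:ℤ) * W' := by
                  apply mul_le_mul_of_nonneg_right _ hW'nn
                  rw [← hxsSum]
                  apply Finset.sum_le_sum_of_subset_of_nonneg (Finset.subset_univ _)
                  intro j _ _
                  exact hxs_nn j
          have hWj₀ : W j₀ = ((2*N₀+1 : ℕ) : ℤ) * W' := by
            have hj₀n : (j₀:ℕ) < n := j₀.isLt
            have hexp : n - 1 - (j₀:ℕ) = (n - 1 - ((j₀:ℕ)+1)) + 1 := by omega
            rw [hW, hW']
            simp only
            rw [hexp, pow_succ']
          have habs := abs_le.mp htail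
          rw [← hsplit, hhead, hWj₀]
          have h1 : (1:ℤ) ≤ d' j₀ := hd'j₀
          have h2 : ((2*N₀+1 : ℕ):ℤ) * W' ≤ d' j₀ * (((2*N₀+1 : ℕ):ℤ) * W') :=
            le_mul_of_one_le_left (by positivity) h1
          have hc : ((2*N₀+1 : ℕ):ℤ) = 2*(N₀:ℤ)+1 := by push_cast; ring
          rw [hc] at h2 ⊢
          have hW'pos : (0:ℤ) < W' := by positivity
          have hA : (0:ℤ) ≤ (N₀:ℤ) * W' := by positivity
          linarith [habs.1, h2, hW'pos, hA]
      omega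
    -- contradiction with minimality
    have hmem : (μ (xs - d')).toNat ∈ K2 := by
      refine ⟨xs - d', hfeas_sub.1, ?_, rfl⟩
      rw [show ∑ j, (xs - d') j = ∑ j, xs j - ∑ j, d' j by
        rw [← Finset.sum_sub_distrib]; rfl]
      rw [hxsSum, hd'sum]; ring
    have h1 := Nat.sInf_le hmem
    have h2 : (μ (xs - d')).toNat < (μ xs).toNat := by
      rw [Int.toNat_lt_toNat]
      · exact hμdec
      · calc (0:ℤ) ≤ μ (xs - d') := hμnn (fun j => by
              simpa using (habs_le j).2)
          _ < μ xs := hμdec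
    rw [hxsμ] at h2
    omega
  -- assemble the answer
  refine ⟨xs, hxsOpt.1.1, hxsOpt.1.2, ?_, ?_⟩
  · intro z hz0 hzb
    rw [hxsOpt.2]
    exact hvub _ ⟨z, hz0, hzb, rfl⟩
  · have habs : ∑ i, |xs i| = ∑ i, xs i :=
      Finset.sum_congr rfl (fun i _ => abs_of_nonneg (hxs_nn i))
    rw [habs]
    by_cases hb0 : ∀ i, b i = 0
    · have hxz : xs = 0 := by
        apply hP xs (fun j => le_of_eq (abs_of_nonneg (hxs_nn j)))
        rw [hxsOpt.1.2]
        funext i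
        exact hb0 i
      rw [hxz]
      simp only [Pi.zero_apply, Finset.sum_const_zero]
      positivity
    · push_neg at hb0
      obtain ⟨i₀, hi₀⟩ := hb0
      set B : ℕ := Finset.univ.sup (fun i => (b i).natAbs) with hB
      have hm1 : 1 ≤ m := i₀.pos
      have hB1 : 1 ≤ B := by
        have h1 : 1 ≤ (b i₀).natAbs := Int.natAbs_pos.mpr hi₀
        rw [hB]
        exact le_trans h1 (Finset.le_sup (f := fun i => (b i).natAbs) (Finset.mem_univ i₀))
      have hb_bound : ∀ i, |b i| ≤ (B:ℤ) := by
        intro i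
        have h1 : (b i).natAbs ≤ B := by
          rw [hB]; exact Finset.le_sup (f := fun i => (b i).natAbs) (Finset.mem_univ i)
        rw [Int.abs_eq_natAbs]
        exact_mod_cast h1
      have hΔ1 : 1 ≤ Δ := by
        by_contra h
        push_neg at h
        have hΔ0 : (Δ:ℤ) = 0 := by
          have : Δ = 0 := by omega
          simp [this]
        have hA0 : ∀ i j, A i j = 0 := by
          intro i j
          have h1 := hΔ i j
          rw [hΔ0] at h1
          exact abs_nonpos_iff.mp h1
        apply hi₀
        rw [← hxsOpt.1.2]
        show A.mulVec xs i₀ = 0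
        have h2 : A.mulVec xs i₀ = ∑ j, A i₀ j * xs j := rfl
        rw [h2]
        exact Finset.sum_eq_zero (fun j _ => by rw [hA0 i₀ j, zero_mul])
      by_cases hn2 : 2 ≤ n
      · exact pap_main hm1 hn2 Δ B hΔ1 hB1 A b xs hΔ hb_bound hxs_nn hxsOpt.1.2 hP
      · have hn01 : n = 0 ∨ n = 1 := by omega
        rcases hn01 with hn0 | hn1
        · exfalso
          apply hi₀
          rw [← hxsOpt.1.2]
          show A.mulVec xs i₀ = 0
          subst hn0
          simp [Matrix.mulVec, dotProduct]
        · subst hn1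
          by_cases hcol : ∀ i, A i 0 = 0
          · exfalso
            apply hi₀
            rw [← hxsOpt.1.2]
            show A.mulVec xs i₀ = 0
            have h2 : A.mulVec xs i₀ = ∑ j, A i₀ j * xs j := rfl
            rw [h2]
            exact Finset.sum_eq_zero (fun j _ => by
              rw [show (j : Fin 1) = 0 from Subsingleton.elim _ _, hcol i₀, zero_mul])
          · push_neg at hcol
            obtain ⟨i₁, hi₁⟩ := hcol
            have hbeq : b i₁ = A i₁ 0 * xs 0 := by
              rw [← hxsOpt.1.2]
              show A.mulVec xs i₁ = _
              have h2 : A.mulVec xs i₁ = ∑ j, A i₁ j * xs j := rfl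
              rw [h2, Fin.sum_univ_one]
            have hxb : xs 0 ≤ (B:ℤ) := by
              have h1 : (1:ℤ) ≤ |A i₁ 0| := Int.one_le_abs hi₁
              have h2 : |xs 0| ≤ |A i₁ 0| * |xs 0| :=
                le_mul_of_one_le_left (abs_nonneg _) h1
              have h3 : |A i₁ 0| * |xs 0| = |b i₁| := by rw [← abs_mul, hbeq]
              have h4 := hb_bound i₁
              have h5 := le_abs_self (xs 0)
              omega
            have hfin : (B:ℤ) ≤ ((1 ^ 2 * (m * (Δ + B)) ^ (2 * m + 1) : ℕ) : ℤ) := by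
              have h1 : B ≤ m * (Δ + B) := by nlinarith
              have h2 : m * (Δ + B) ≤ (m * (Δ + B)) ^ (2 * m + 1) :=
                Nat.le_self_pow (by omega) _
              have h3 : B ≤ 1 ^ 2 * (m * (Δ + B)) ^ (2 * m + 1) := by
                rw [one_pow, one_mul]
                omega
              exact_mod_cast h3
            rw [Fin.sum_univ_one]
            exact le_trans hxb hfin
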